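/- Let (X,w) be a weighted graph (weight function satisfying w(X(1)) totals as in the weight axioms, in particular 2w(v) = ∑_{e ∋ v} w(e) for each vertex v and ∑_{e ∈ X(1)} w(e) = 1). Let t = max{ w(e)/w(v) : v a vertex, e an edge containing v }. If T is a subgraph of X with total edge weight w(T(1)) ≥ t, then T contains a cycle. -/

import Mathlib

open SimpleGraph Finset

namespace Stmt5Aux

variable {V : Type*}

/-- Two distinct neighbors of `b` joined by a path avoiding `b` give a cycle. -/
lemma no_two_neighbors {H : SimpleGraph V} (hac : H.IsAcyclic) {b x y : V}
    (hx : H.Adj b x) (hy : H.Adj b y) (hxy : x ≠ y) (r : H.Walk x y)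
    (hr : r.IsPath) (hb : b ∉ r.support) : False := by
  classical
  have hcyc : (SimpleGraph.Walk.cons hx (r.concat hy.symm)).IsCycle := by
    rw [SimpleGraph.Walk.cons_isCycle_iff]
    constructor
    · rw [← SimpleGraph.Walk.isPath_reverse_iff, SimpleGraph.Walk.reverse_concat]
      rw [SimpleGraph.Walk.cons_isPath_iff]
      refine ⟨hr.reverse, ?_⟩
      rwa [SimpleGraph.Walk.support_reverse, List.mem_reverse]
    · rw [SimpleGraph.Walk.edges_concat, List.concat_eq_append]
      intro hmem
      rcases List.mem_append.1 hmem with h1 | h2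
      · exact hb (r.fst_mem_support_of_mem_edges h1)
      · rw [List.mem_singleton, Sym2.eq_iff] at h2
        rcases h2 with ⟨hby, _⟩ | ⟨_, hxy'⟩
        · exact hy.ne hby
        · exact hxy hxy'
  exact hac _ hcyc

/-- A finite acyclic graph with an edge has a leaf. -/
lemma exists_leaf [Fintype V] {H : SimpleGraph V} (hac : H.IsAcyclic)
    {a b : V} (hab : H.Adj a b) :
    ∃ v u, H.Adj v u ∧ ∀ c, H.Adj v c → c = u := by
  classical
  set P : ℕ → Prop := fun n => ∃ (x y : V) (p : H.Walk x y), p.IsPath ∧ p.length = n with hPdef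
  have h1 : P 1 := by
    refine ⟨a, b, SimpleGraph.Walk.cons hab SimpleGraph.Walk.nil, ?_, rfl⟩
    rw [SimpleGraph.Walk.cons_isPath_iff]
    simp [hab.ne]
  have hbd : ∀ n, P n → n ≤ Fintype.card V := by
    rintro n ⟨x, y, p, hp, rfl⟩
    exact hp.length_lt.le
  set n := Nat.findGreatest P (Fintype.card V) with hn
  have hPn : P n := Nat.findGreatest_spec (hbd 1 h1) h1
  have hmax : ∀ m, P m → m ≤ n := fun m hm => Nat.le_findGreatest (hbd m hm) hm
  obtain ⟨x, y, p, hp, hlen⟩ := hPn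
  have hn1 : 1 ≤ n := hmax 1 h1
  cases hq : p.reverse with
  | nil =>
    exfalso
    have := congrArg SimpleGraph.Walk.length hq
    rw [SimpleGraph.Walk.length_reverse, hlen] at this
    simp only [SimpleGraph.Walk.length_nil] at this
    omega
  | @cons _ u₀ _ h q' =>
    have hqp : (p.reverse).IsPath := hp.reverse
    rw [hq, SimpleGraph.Walk.cons_isPath_iff] at hqp
    obtain ⟨hq'path, hynot⟩ := hqp
    have hlq : q'.length + 1 = n := by
      have := congrArg SimpleGraph.Walk.length hq
      rw [SimpleGraph.Walk.length_reverse, hlen, SimpleGraph.Walk.length_cons] at this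
      omega
    refine ⟨y, u₀, h, ?_⟩
    intro c hc
    by_contra hne
    have hcy : c ≠ y := hc.ne'
    have hcsup : c ∈ q'.support := by
      by_contra hcs
      have hnotin : c ∉ (SimpleGraph.Walk.cons h q').support := by
        rw [SimpleGraph.Walk.support_cons]
        simp [hcy, hcs]
      have hext : (SimpleGraph.Walk.cons hc.symm (SimpleGraph.Walk.cons h q')).IsPath := by
        rw [SimpleGraph.Walk.cons_isPath_iff]
        refine ⟨?_, hnotin⟩
        rw [← hq]
        exact hp.reverse
      have hle := hmax (n + 1) ⟨c, x, _, hext, by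
        rw [SimpleGraph.Walk.length_cons, SimpleGraph.Walk.length_cons]
        omega⟩
      omega
    exact no_two_neighbors hac h hc (fun he => hne he.symm)
      (q'.takeUntil c hcsup) (hq'path.takeUntil hcsup)
      (fun hbr => hynot (SimpleGraph.Walk.support_takeUntil_subset _ hcsup hbr))

lemma endpoint_mem_support {H : SimpleGraph V} {e : Sym2 V} (he : e ∈ H.edgeSet) {x : V}
    (hx : x ∈ e) : x ∈ H.support := by
  induction e with
  | _ a b =>
    rw [SimpleGraph.mem_edgeSet] at he
    rw [SimpleGraph.mem_support]
    rcases Sym2.mem_iff.1 hx with rfl | rfl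
    · exact ⟨_, he⟩
    · exact ⟨_, he.symm⟩

lemma exists_inj [Fintype V] :
    ∀ (n : ℕ) (H : SimpleGraph V) [Fintype H.edgeSet], H.edgeFinset.card ≤ n →
      H.IsAcyclic → H.edgeFinset.Nonempty →
      ∃ (f : Sym2 V → V) (v₀ : V), (∀ e ∈ H.edgeFinset, f e ∈ e) ∧
        Set.InjOn f ↑H.edgeFinset ∧ v₀ ∈ H.support ∧ ∀ e ∈ H.edgeFinset, f e ≠ v₀ := by
  intro n
  induction n with
  | zero =>
    intro H _ hcard _ hne
    exact absurd (Finset.card_pos.2 hne) (by omega)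
  | succ n ih =>
    intro H _ hcard hac hne
    classical
    have hab : ∃ a b, H.Adj a b := by
      obtain ⟨e, he⟩ := hne
      rw [SimpleGraph.mem_edgeFinset] at he
      induction e with
      | _ a b => exact ⟨a, b, he⟩
    obtain ⟨a, b, hab⟩ := hab
    obtain ⟨v, u, hvu, huniq⟩ := exists_leaf hac hab
    have he : s(v, u) ∈ H.edgeFinset := by
      rw [SimpleGraph.mem_edgeFinset]; exact hvu
    set H' : SimpleGraph V := H.deleteEdges {s(v, u)} with hH'
    haveI : Fintype H'.edgeSet := (Set.toFinite _).fintype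
    have hH'E : H'.edgeFinset = H.edgeFinset.erase s(v, u) := by
      ext e'
      simp only [SimpleGraph.mem_edgeFinset, hH', SimpleGraph.edgeSet_deleteEdges,
        Set.mem_diff, Set.mem_singleton_iff, Finset.mem_erase, SimpleGraph.mem_edgeFinset]
      tauto
    have hH'le : ∀ {x y : V}, H'.Adj x y → H.Adj x y := by
      intro x y hxy
      rw [hH', SimpleGraph.deleteEdges_adj] at hxy
      exact hxy.1
    have hH'ac : H'.IsAcyclic := by
      intro w c hcyc
      have hsub : ∀ e ∈ c.edges, e ∈ H.edgeSet := fun e hme =>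
        (SimpleGraph.edgeSet_deleteEdges _ ▸ c.edges_subset_edgeSet hme).1
      exact hac _ (hcyc.transfer hsub)
    have hvnot : v ∉ H'.support := by
      rintro ⟨w, hw⟩
      replace hw : H'.Adj v w := hw
      rw [hH', SimpleGraph.deleteEdges_adj] at hw
      exact hw.2 (by rw [huniq w hw.1]; exact Set.mem_singleton _)
    by_cases hne' : H'.edgeFinset.Nonempty
    · have hcard' : H'.edgeFinset.card ≤ n := by
        rw [hH'E, Finset.card_erase_of_mem he]
        have := Finset.card_pos.2 hne
        omega
      obtain ⟨f', v₀, hf'mem, hf'inj, hv₀, hf'ne⟩ := ih H' hcard' hH'ac hne'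
      refine ⟨Function.update f' s(v, u) v, v₀, ?_, ?_, ?_, ?_⟩
      · intro e' he'
        by_cases h' : e' = s(v, u)
        · subst h'; rw [Function.update_self]; exact Sym2.mem_mk_left _ _
        · rw [Function.update_of_ne h']
          exact hf'mem e' (by rw [hH'E]; exact Finset.mem_erase.2 ⟨h', he'⟩)
      · intro e₁ h₁ e₂ h₂ heq
        simp only [Finset.coe_mem, Finset.mem_coe] at h₁ h₂
        have key : ∀ e', e' ∈ H'.edgeFinset → f' e' ∈ H'.support := fun e' he' =>
          endpoint_mem_support (SimpleGraph.mem_edgeFinset.1 he') (hf'mem e' he')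
        by_cases h1' : e₁ = s(v, u) <;> by_cases h2' : e₂ = s(v, u)
        · rw [h1', h2']
        · exfalso
          rw [h1', Function.update_self, Function.update_of_ne h2'] at heq
          have : e₂ ∈ H'.edgeFinset := by rw [hH'E]; exact Finset.mem_erase.2 ⟨h2', h₂⟩
          exact hvnot (heq ▸ key e₂ this)
        · exfalso
          rw [h2', Function.update_self, Function.update_of_ne h1'] at heq
          have : e₁ ∈ H'.edgeFinset := by rw [hH'E]; exact Finset.mem_erase.2 ⟨h1', h₁⟩
          exact hvnot (heq ▸ key e₁ this)
        · rw [Function.update_of_ne h1', Function.update_of_ne h2'] at heq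
          have m1 : e₁ ∈ H'.edgeFinset := by rw [hH'E]; exact Finset.mem_erase.2 ⟨h1', h₁⟩
          have m2 : e₂ ∈ H'.edgeFinset := by rw [hH'E]; exact Finset.mem_erase.2 ⟨h2', h₂⟩
          exact hf'inj (Finset.mem_coe.2 m1) (Finset.mem_coe.2 m2) heq
      · obtain ⟨w, hw⟩ := hv₀
        exact ⟨w, hH'le hw⟩
      · intro e' he'
        by_cases h' : e' = s(v, u)
        · subst h'; rw [Function.update_self]
          intro hveq
          exact hvnot (hveq ▸ hv₀)
        · rw [Function.update_of_ne h']
          exact hf'ne e' (by rw [hH'E]; exact Finset.mem_erase.2 ⟨h', he'⟩)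
    · rw [Finset.not_nonempty_iff_eq_empty, hH'E] at hne'
      have hsingle : ∀ e' ∈ H.edgeFinset, e' = s(v, u) := by
        intro e' he'
        by_contra h'
        have : e' ∈ H.edgeFinset.erase s(v, u) := Finset.mem_erase.2 ⟨h', he'⟩
        rw [hne'] at this
        exact absurd this (Finset.notMem_empty _)
      refine ⟨fun _ => v, u, ?_, ?_, ⟨v, hvu.symm⟩, ?_⟩
      · intro e' he'
        rw [hsingle e' he']
        exact Sym2.mem_mk_left _ _
      · intro e₁ h₁ e₂ h₂ _
        rw [hsingle e₁ h₁, hsingle e₂ h₂]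
      · intro e' _
        exact hvu.ne

lemma walk_toSubgraph_le {G : SimpleGraph V} {T : G.Subgraph} :
    ∀ {u v : V} (p : G.Walk u v), u ∈ T.verts → (∀ e ∈ p.edges, e ∈ T.edgeSet) →
      p.toSubgraph ≤ T := by
  intro u v p
  induction p with
  | nil =>
    intro hu _
    exact (SimpleGraph.singletonSubgraph_le_iff _ _).2 hu
  | @cons a b c h p ih =>
    intro hu he
    have hT : T.Adj a b := by
      have : s(a, b) ∈ T.edgeSet := he _ (by simp [SimpleGraph.Walk.edges_cons])
      rwa [SimpleGraph.Subgraph.mem_edgeSet] at this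
    refine sup_le (SimpleGraph.subgraphOfAdj_le_of_adj T hT) (ih hT.snd_mem ?_)
    intro e he'
    exact he _ (by simp [SimpleGraph.Walk.edges_cons, he'])

end Stmt5Aux

open Stmt5Aux

/-- In a weighted graph `(X, w)` (edge weights summing to `1`, each vertex weight
being half the sum of the weights of incident edges), if `t` bounds all ratios
`w(e)/w(v)` for `v ∈ e`, then any subgraph whose total edge weight is at least `t`
contains a cycle. -/
theorem stmt5 {V : Type*} [Fintype V] (G : SimpleGraph V) [DecidableRel G.Adj]
    (wE : Sym2 V → ℝ) (wV : V → ℝ) (t : ℝ)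
    (hEpos : ∀ e ∈ G.edgeSet, 0 < wE e) (hVpos : ∀ v : V, 0 < wV v)
    (hsum : ∑ e ∈ G.edgeFinset, wE e = 1)
    (hvert : ∀ v : V, 2 * wV v = ∑ u ∈ G.neighborFinset v, wE s(v, u))
    (ht : ∀ (v : V) (e : Sym2 V), e ∈ G.edgeSet → v ∈ e → wE e ≤ t * wV v)
    (T : G.Subgraph)
    (hT : t ≤ ∑ e ∈ (Set.toFinite T.edgeSet).toFinset, wE e) :
    ∃ (v : V) (c : G.Walk v v), c.IsCycle ∧ c.toSubgraph ≤ T := by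
  classical
  by_contra hcon
  push_neg at hcon
  set H : SimpleGraph V := T.spanningCoe with hH
  haveI : Fintype H.edgeSet := (Set.toFinite _).fintype
  have hedge : H.edgeSet = T.edgeSet := by
    ext e
    induction e with
    | _ a b => rfl
  have hHle : H ≤ G := T.spanningCoe_le
  have hfin : (Set.toFinite T.edgeSet).toFinset = H.edgeFinset := by
    ext e
    rw [Set.Finite.mem_toFinset, SimpleGraph.mem_edgeFinset, hedge]
  rw [hfin] at hT
  -- t is positive
  have hGedge : G.edgeFinset.Nonempty := by
    by_contra hGe
    rw [Finset.not_nonempty_iff_eq_empty] at hGe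
    rw [hGe, Finset.sum_empty] at hsum
    norm_num at hsum
  have htpos : 0 < t := by
    obtain ⟨eG, heG⟩ := hGedge
    rw [SimpleGraph.mem_edgeFinset] at heG
    induction eG with
    | _ a b =>
      have h1 := hEpos _ heG
      have h2 := ht a _ heG (Sym2.mem_mk_left _ _)
      nlinarith [hVpos a]
  -- H is acyclic
  have hac : H.IsAcyclic := by
    intro v c hcyc
    have hedges : ∀ e ∈ c.edges, e ∈ G.edgeSet := fun e hme =>
      SimpleGraph.edgeSet_mono hHle (c.edges_subset_edgeSet hme)
    refine hcon v (c.transfer G hedges) (hcyc.transfer hedges) ?_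
    apply walk_toSubgraph_le
    · cases c with
      | nil => exact absurd hcyc (by simp)
      | cons h p => exact SimpleGraph.Subgraph.Adj.fst_mem (h : T.Adj _ _)
    · intro e hme
      rw [SimpleGraph.Walk.edges_transfer] at hme
      exact hedge ▸ c.edges_subset_edgeSet hme
  -- total vertex weight is 1
  have hvsum : ∑ v, wV v = 1 := by
    have hdart1 : ∑ d : G.Dart, wE d.edge
        = ∑ v, ∑ u ∈ G.neighborFinset v, wE s(v, u) := by
      rw [← Finset.sum_fiberwise_of_maps_to (fun (d : G.Dart) _ => Finset.mem_univ d.fst)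
        (fun d => wE d.edge)]
      refine Finset.sum_congr rfl fun v _ => ?_
      refine Finset.sum_bij' (fun d _ => d.snd)
        (fun u hu => G.dartOfNeighborSet v ⟨u, (SimpleGraph.mem_neighborFinset _ _ _).1 hu⟩)
        ?_ ?_ ?_ ?_ ?_
      · intro d hd
        simp only [Finset.mem_filter, Finset.mem_univ, true_and] at hd
        rw [SimpleGraph.mem_neighborFinset]
        exact hd ▸ d.adj
      · intro u hu
        simp [SimpleGraph.dartOfNeighborSet]
      · intro d hd
        simp only [Finset.mem_filter, Finset.mem_univ, true_and] at hd
        subst hd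
        rfl
      · intro u hu
        rfl
      · intro d hd
        simp only [Finset.mem_filter, Finset.mem_univ, true_and] at hd
        subst hd
        rfl
    have hdart2 : ∑ d : G.Dart, wE d.edge = 2 * ∑ e ∈ G.edgeFinset, wE e := by
      rw [← Finset.sum_fiberwise_of_maps_to
        (fun (d : G.Dart) _ => SimpleGraph.mem_edgeFinset.2 d.edge_mem) (fun d => wE d.edge)]
      rw [Finset.mul_sum]
      refine Finset.sum_congr rfl fun e he => ?_
      have hcard : (Finset.univ.filter fun d : G.Dart => d.edge = e).card = 2 :=
        G.dart_edge_fiber_card e (SimpleGraph.mem_edgeFinset.1 he)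
      rw [Finset.sum_congr rfl (fun d hd => by
        rw [(Finset.mem_filter.1 hd).2]), Finset.sum_const, hcard]
      ring
    have h2 : 2 * ∑ v, wV v = 2 := by
      calc 2 * ∑ v, wV v = ∑ v, 2 * wV v := by rw [Finset.mul_sum]
        _ = ∑ v, ∑ u ∈ G.neighborFinset v, wE s(v, u) := Finset.sum_congr rfl fun v _ => hvert v
        _ = ∑ d : G.Dart, wE d.edge := hdart1.symm
        _ = 2 * ∑ e ∈ G.edgeFinset, wE e := hdart2
        _ = 2 := by rw [hsum]; ring
    linarith
  -- conclude
  by_cases hne : H.edgeFinset.Nonempty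
  · obtain ⟨f, v₀, hfmem, hfinj, _, hfne⟩ :=
      exists_inj H.edgeFinset.card H le_rfl hac hne
    have step1 : ∑ e ∈ H.edgeFinset, wE e ≤ t * ∑ e ∈ H.edgeFinset, wV (f e) := by
      rw [Finset.mul_sum]
      refine Finset.sum_le_sum fun e he => ?_
      exact ht (f e) e (SimpleGraph.edgeSet_mono hHle (SimpleGraph.mem_edgeFinset.1 he))
        (hfmem e he)
    have step2 : ∑ e ∈ H.edgeFinset, wV (f e) = ∑ v ∈ H.edgeFinset.image f, wV v :=
      (Finset.sum_image fun x hx y hy hxy =>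
        hfinj (Finset.mem_coe.2 hx) (Finset.mem_coe.2 hy) hxy).symm
    have hsubset : H.edgeFinset.image f ⊆ Finset.univ.erase v₀ := by
      intro x hx
      obtain ⟨e, he, rfl⟩ := Finset.mem_image.1 hx
      exact Finset.mem_erase.2 ⟨hfne e he, Finset.mem_univ _⟩
    have step3 : ∑ v ∈ H.edgeFinset.image f, wV v ≤ ∑ v ∈ Finset.univ.erase v₀, wV v :=
      Finset.sum_le_sum_of_subset_of_nonneg hsubset fun i _ _ => (hVpos i).le
    have step4 : ∑ v ∈ Finset.univ.erase v₀, wV v = 1 - wV v₀ := by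
      rw [Finset.sum_erase_eq_sub (Finset.mem_univ v₀), hvsum]
    nlinarith [hVpos v₀, mul_pos htpos (hVpos v₀)]
  · rw [Finset.not_nonempty_iff_eq_empty] at hne
    rw [hne, Finset.sum_empty] at hT
    linarith
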